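/- arXiv:2202.03877 — 2 statements merged into one kernel-verified Lean document; each statement's English description precedes it below -/
import Mathlib

section
/- Let d ≥ 3 be an integer and λ ∈ (0, 1/d²). Then the improper integral ∫₀¹ ( (1/(1-t)) · (2(d-1))/( d-2 + d·√(1 + 4(d-1)λt/(1-t)) ) - 1 ) / t · dt converges and equals ln( d^{d-2} / ( (d-1)^{d-1} · λ ) ). -/
open Real Set

/-- Auxiliary function: `w a t = √((1-t)/(1+(a-1)t))`, the reciprocal of
`√(1 + a t/(1-t))` on `(0,1)`. -/
noncomputable def myW (a t : ℝ) : ℝ := Real.sqrt ((1 - t) / (1 + (a - 1) * t))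

/-- The antiderivative. -/
noncomputable def myF (D a t : ℝ) : ℝ :=
  (D - 2) * Real.log (D + (D - 2) * myW a t) + Real.log (1 + (a - 1) * (myW a t) ^ 2)
    - D * Real.log (1 + myW a t)

lemma myden_pos {a : ℝ} (ha : 0 < a) (ha1 : a < 1) {t : ℝ} (ht0 : 0 ≤ t) (ht1 : t ≤ 1) :
    0 < 1 + (a - 1) * t := by nlinarith

lemma myW_nonneg (a t : ℝ) : 0 ≤ myW a t := Real.sqrt_nonneg _

lemma myW_le_one {a : ℝ} (ha : 0 < a) (ha1 : a < 1) {t : ℝ} (ht0 : 0 ≤ t) (ht1 : t ≤ 1) :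
    myW a t ≤ 1 := by
  rw [myW, Real.sqrt_le_one]
  rw [div_le_one (myden_pos ha ha1 ht0 ht1)]
  nlinarith

lemma myW_pos {a : ℝ} (ha : 0 < a) (ha1 : a < 1) {t : ℝ} (ht0 : 0 ≤ t) (ht1 : t < 1) :
    0 < myW a t := by
  apply Real.sqrt_pos.2
  apply div_pos (by linarith) (myden_pos ha ha1 ht0 ht1.le)

lemma myW_sq {a : ℝ} (ha : 0 < a) (ha1 : a < 1) {t : ℝ} (ht0 : 0 ≤ t) (ht1 : t ≤ 1) :
    (myW a t) ^ 2 = (1 - t) / (1 + (a - 1) * t) := by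
  rw [myW, Real.sq_sqrt]
  exact div_nonneg (by linarith) (myden_pos ha ha1 ht0 ht1).le

lemma myW_rel {a : ℝ} (ha : 0 < a) (ha1 : a < 1) {t : ℝ} (ht0 : 0 ≤ t) (ht1 : t ≤ 1) :
    (myW a t) ^ 2 * (1 + (a - 1) * t) = 1 - t := by
  rw [myW_sq ha ha1 ht0 ht1, div_mul_cancel₀]
  exact (myden_pos ha ha1 ht0 ht1).ne'

lemma myW_lt_one {a : ℝ} (ha : 0 < a) (ha1 : a < 1) {t : ℝ} (ht0 : 0 < t) (ht1 : t < 1) :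
    myW a t < 1 := by
  rcases lt_or_eq_of_le (myW_le_one ha ha1 ht0.le ht1.le) with h' | h'
  · exact h'
  · exfalso
    have h := myW_rel ha ha1 ht0.le ht1.le
    rw [h'] at h
    nlinarith [mul_pos ha ht0]

lemma myW_zero (a : ℝ) : myW a 0 = 1 := by simp [myW]

lemma myW_one (a : ℝ) : myW a 1 = 0 := by simp [myW]

lemma myW_sqrt {a : ℝ} (ha : 0 < a) (ha1 : a < 1) {t : ℝ} (ht0 : 0 < t) (ht1 : t < 1) :
    Real.sqrt (1 + a * t / (1 - t)) = 1 / myW a t := by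
  have h1 : (0:ℝ) < 1 - t := by linarith
  have h2 := myden_pos ha ha1 ht0.le ht1.le
  have : 1 + a * t / (1 - t) = ((1 - t) / (1 + (a - 1) * t))⁻¹ := by
    rw [inv_div]
    field_simp
    ring
  rw [this, Real.sqrt_inv, one_div, myW]

lemma myW_hasDeriv {a : ℝ} (ha : 0 < a) (ha1 : a < 1) {t : ℝ} (ht0 : 0 < t) (ht1 : t < 1) :
    HasDerivAt (myW a) ((-a / (1 + (a - 1) * t) ^ 2) / (2 * myW a t)) t := by
  have h2 := myden_pos ha ha1 ht0.le ht1.le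
  have hnum : HasDerivAt (fun s : ℝ => 1 - s) (-1) t := by
    simpa using (hasDerivAt_id t).const_sub 1
  have hden : HasDerivAt (fun s : ℝ => 1 + (a - 1) * s) (a - 1) t := by
    simpa using ((hasDerivAt_id t).const_mul (a - 1)).const_add 1
  have hq : HasDerivAt (fun s : ℝ => (1 - s) / (1 + (a - 1) * s))
      (-a / (1 + (a - 1) * t) ^ 2) t := by
    have := hnum.div hden h2.ne'
    exact this.congr_deriv (by ring)
  have hqt : (1 - t) / (1 + (a - 1) * t) ≠ 0 := by
    apply ne_of_gt; apply div_pos (by linarith) h2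
  exact hq.sqrt hqt

theorem mykey (D a w t : ℝ) (hD : 3 ≤ D) (ha : 0 < a)
    (hw0 : 0 < w) (hw1 : w < 1) (ht0 : 0 < t) (ht1 : t < 1)
    (hqq : 0 < 1 + (a-1)*w^2)
    (hrel : w^2*(1+(a-1)*t) = 1-t) :
    ((D-2)^2/(D+(D-2)*w) + 2*(a-1)*w/(1+(a-1)*w^2) - D/(1+w)) * (-a/((1+(a-1)*t)^2 * (2*w)))
      = ((1/(1-t)) * (2*(D-1))/(D-2+D*(1/w)) - 1)/t := by
  have hqq' : (1 + (a-1)*w^2) ≠ 0 := ne_of_gt hqq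
  have ha' : a ≠ 0 := ne_of_gt ha
  have ht : t = (1-w^2)/(1+(a-1)*w^2) := by
    rw [eq_div_iff hqq']; nlinarith [hrel]
  have h1 : (D + (D-2)*w) ≠ 0 := by nlinarith
  have h2 : (1 + w) ≠ 0 := by nlinarith
  have hw' : w ≠ 0 := ne_of_gt hw0
  have h6 : ((D-2)*w + D) ≠ 0 := by nlinarith
  have h7 : (1 - w^2) ≠ 0 := by nlinarith
  have h5 : D - 2 + D * (1/w) = ((D-2)*w + D)/w := by field_simp
  have e1 : 1 + (a-1)*t = a/(1+(a-1)*w^2) := by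
    rw [ht]; field_simp; ring
  have e2 : 1 - t = a*w^2/(1+(a-1)*w^2) := by
    rw [ht, one_sub_div hqq']; congr 1; ring
  rw [h5, e1, e2, ht]
  have hQ2 : 1 + w^2*(a-1) ≠ 0 := by rw [mul_comm]; exact hqq'
  field_simp
  ring

theorem mynonneg (D a w t : ℝ) (hD : 3 ≤ D) (ha : 0 < a)
    (haD : a * D^2 ≤ 4*(D-1))
    (hw0 : 0 < w) (hw1 : w < 1) (ht0 : 0 < t) (ht1 : t < 1)
    (hqq : 0 < 1 + (a-1)*w^2)
    (hrel : w^2*(1+(a-1)*t) = 1-t) :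
    0 ≤ ((1/(1-t)) * (2*(D-1))/(D-2+D*(1/w)) - 1)/t := by
  have hqq' : (1 + (a-1)*w^2) ≠ 0 := ne_of_gt hqq
  have ht' : (0:ℝ) < 1 - t := by linarith
  have hw' : w ≠ 0 := ne_of_gt hw0
  have h6 : (0:ℝ) < (D-2)*w + D := by nlinarith
  have h5 : D - 2 + D * (1/w) = ((D-2)*w + D)/w := by field_simp
  have e2 : 1 - t = a*w^2/(1+(a-1)*w^2) := by
    have ht : t = (1-w^2)/(1+(a-1)*w^2) := by
      rw [eq_div_iff hqq']; nlinarith [hrel]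
    rw [ht, one_sub_div hqq']; congr 1; ring
  apply div_nonneg _ ht0.le
  rw [sub_nonneg, h5]
  have heq : (1/(1-t)) * (2*(D-1))/(((D-2)*w + D)/w) = 2*(D-1)*w/((1-t)*((D-2)*w+D)) := by
    field_simp
  rw [heq, le_div_iff₀ (by positivity), one_mul]
  rw [e2, div_mul_eq_mul_div, div_le_iff₀ hqq]
  have hP : 0 ≤ (1-w)*(2*(D-1)*(1+w) - a*D*w) := by
    apply mul_nonneg (by linarith)
    nlinarith
  nlinarith [hP]

theorem myF_hasDeriv (D a : ℝ) (hD : 3 ≤ D) (ha : 0 < a) (ha1 : a < 1)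
    {t : ℝ} (ht0 : 0 < t) (ht1 : t < 1) :
    HasDerivAt (myF D a)
      (((1/(1-t)) * (2*(D-1))/(D-2+D*(1/myW a t)) - 1)/t) t := by
  set w := myW a t with hw_def
  have hw0 : 0 < w := myW_pos ha ha1 ht0.le ht1
  have hw1 : w < 1 := myW_lt_one ha ha1 ht0 ht1
  have hqq : 0 < 1 + (a-1)*w^2 := by nlinarith
  have hrel : w^2*(1+(a-1)*t) = 1-t := myW_rel ha ha1 ht0.le ht1.le
  have hw' : HasDerivAt (myW a) ((-a / (1 + (a - 1) * t) ^ 2) / (2 * w)) t :=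
    myW_hasDeriv ha ha1 ht0 ht1
  set w' := (-a / (1 + (a - 1) * t) ^ 2) / (2 * w) with hw'_def
  have h1pos : (0:ℝ) < D + (D-2)*w := by nlinarith
  have h2pos : (0:ℝ) < 1 + w := by linarith
  have hpart1 : HasDerivAt (fun s => (D-2) * Real.log (D + (D-2) * myW a s))
      ((D-2) * (((D-2) * w') / (D + (D-2) * w))) t := by
    have hinner : HasDerivAt (fun s => D + (D-2) * myW a s) ((D-2) * w') t :=
      (hw'.const_mul (D-2)).const_add D
    exact (hinner.log h1pos.ne').const_mul (D-2)
  have hpart2 : HasDerivAt (fun s => Real.log (1 + (a-1) * (myW a s)^2))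
      (((a-1) * (2 * w ^ 1 * w')) / (1 + (a-1) * w^2)) t := by
    have hinner : HasDerivAt (fun s => 1 + (a-1) * (myW a s)^2)
        ((a-1) * (2 * w ^ 1 * w')) t := by
      exact ((hw'.pow 2).const_mul (a-1)).const_add 1
    exact hinner.log hqq.ne'
  have hpart3 : HasDerivAt (fun s => D * Real.log (1 + myW a s))
      (D * (w' / (1 + w))) t := by
    have hinner : HasDerivAt (fun s => (1:ℝ) + myW a s) w' t := hw'.const_add 1
    exact (hinner.log h2pos.ne').const_mul D
  have hF : HasDerivAt (myF D a)
      ((D-2) * (((D-2) * w') / (D + (D-2) * w)) + ((a-1) * (2 * w ^ 1 * w')) / (1 + (a-1) * w^2)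
        - D * (w' / (1 + w))) t := (hpart1.add hpart2).sub hpart3
  have hval : (D-2) * (((D-2) * w') / (D + (D-2) * w)) + ((a-1) * (2 * w ^ 1 * w')) / (1 + (a-1) * w^2)
        - D * (w' / (1 + w)) = ((1/(1-t)) * (2*(D-1))/(D-2+D*(1/w)) - 1)/t := by
    rw [← mykey D a w t hD ha hw0 hw1 ht0 ht1 hqq hrel, hw'_def]
    have hP : (1 + (a-1)*t) ≠ 0 := (myden_pos ha ha1 ht0.le ht1.le).ne'
    field_simp
    ring
  rw [← hval]
  exact hF

theorem myF_contOn (D a : ℝ) (hD : 3 ≤ D) (ha : 0 < a) (ha1 : a < 1) :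
    ContinuousOn (myF D a) (Icc 0 1) := by
  have hq : ContinuousOn (fun t : ℝ => (1 - t) / (1 + (a - 1) * t)) (Icc (0:ℝ) 1) := by
    apply ContinuousOn.div
    · fun_prop
    · fun_prop
    · exact fun x hx => (myden_pos ha ha1 hx.1 hx.2).ne'
  have hw : ContinuousOn (myW a) (Icc 0 1) := Real.continuous_sqrt.comp_continuousOn hq
  have hb : ∀ x ∈ Icc (0:ℝ) 1, 0 ≤ myW a x ∧ myW a x ≤ 1 := fun x hx =>
    ⟨myW_nonneg a x, myW_le_one ha ha1 hx.1 hx.2⟩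
  apply ContinuousOn.sub
  apply ContinuousOn.add
  · apply ContinuousOn.mul continuousOn_const
    apply ContinuousOn.log (continuousOn_const.add (continuousOn_const.mul hw))
    intro x hx
    have := (hb x hx).1
    simp only [Pi.add_apply, Pi.mul_apply]
    nlinarith
  · apply ContinuousOn.log (continuousOn_const.add (continuousOn_const.mul (hw.pow 2)))
    intro x hx
    obtain ⟨h1, h2⟩ := hb x hx
    have hsq : myW a x ^ 2 ≤ 1 := by nlinarith
    simp only [Pi.add_apply, Pi.mul_apply, Pi.pow_apply]
    nlinarith [mul_nonneg (sub_nonneg.2 hsq) (by linarith : (0:ℝ) ≤ 1 - a)]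
  · apply ContinuousOn.mul continuousOn_const
    apply ContinuousOn.log (continuousOn_const.add hw)
    intro x hx
    have := (hb x hx).1
    simp only [Pi.add_apply, Pi.mul_apply]
    nlinarith

/-- the integral identity at the core of the computation of
`det_{F_{d-1}}(Id + ζ₁R_{x₁} + ⋯ + ζ_{d-1}R_{x_{d-1}})`. -/
theorem stmt8 (d : ℕ) (hd : 3 ≤ d) (lam : ℝ) (hlam : lam ∈ Set.Ioo (0:ℝ) (1 / (d : ℝ) ^ 2)) :
    IntervalIntegrable (fun t : ℝ =>
        ((1 / (1 - t)) * (2 * ((d : ℝ) - 1)) /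
            ((d : ℝ) - 2 + d * Real.sqrt (1 + 4 * ((d : ℝ) - 1) * lam * t / (1 - t))) - 1) / t)
      MeasureTheory.volume 0 1 ∧
    ∫ t in (0:ℝ)..1,
        ((1 / (1 - t)) * (2 * ((d : ℝ) - 1)) /
            ((d : ℝ) - 2 + d * Real.sqrt (1 + 4 * ((d : ℝ) - 1) * lam * t / (1 - t))) - 1) / t
      = Real.log ((d : ℝ) ^ (d - 2) / (((d : ℝ) - 1) ^ (d - 1) * lam)) := by
  obtain ⟨hlam0, hlam1⟩ := hlam
  set D := (d : ℝ) with hD_def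
  have hD : (3:ℝ) ≤ D := by rw [hD_def]; exact_mod_cast hd
  have hD0 : (0:ℝ) < D := by linarith
  set a := 4 * (D - 1) * lam with ha_def
  have ha : 0 < a := by
    apply mul_pos (by linarith) hlam0
  have haD : a * D^2 ≤ 4 * (D-1) := by
    have h1 : lam * D^2 < 1 := by
      rw [lt_div_iff₀ (by positivity : (0:ℝ) < D^2)] at hlam1
      linarith
    nlinarith [mul_pos (show (0:ℝ) < D - 1 by linarith) (show 0 < 1 - lam*D^2 by linarith)]
  have ha1 : a < 1 := by nlinarith
  -- rewrite the integrand's sqrt argument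
  have harg : ∀ t : ℝ, 1 + 4 * (D - 1) * lam * t / (1 - t) = 1 + a * t / (1 - t) := by
    intro t; rw [ha_def]
  have hderiv : ∀ x ∈ Ioo (0:ℝ) 1, HasDerivAt (myF D a)
      (((1 / (1 - x)) * (2 * (D - 1)) /
            (D - 2 + D * Real.sqrt (1 + 4 * (D - 1) * lam * x / (1 - x))) - 1) / x) x := by
    intro x hx
    rw [harg x, myW_sqrt ha ha1 hx.1 hx.2]
    exact myF_hasDeriv D a hD ha ha1 hx.1 hx.2
  have hpos : ∀ x ∈ Ioo (0:ℝ) 1,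
      0 ≤ ((1 / (1 - x)) * (2 * (D - 1)) /
            (D - 2 + D * Real.sqrt (1 + 4 * (D - 1) * lam * x / (1 - x))) - 1) / x := by
    intro x hx
    rw [harg x, myW_sqrt ha ha1 hx.1 hx.2]
    have hw0 : 0 < myW a x := myW_pos ha ha1 hx.1.le hx.2
    have hw1 : myW a x < 1 := myW_lt_one ha ha1 hx.1 hx.2
    have hqq : 0 < 1 + (a-1) * (myW a x)^2 := by nlinarith
    exact mynonneg D a (myW a x) x hD ha haD hw0 hw1 hx.1 hx.2 hqq
      (myW_rel ha ha1 hx.1.le hx.2.le)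
  have hcont := myF_contOn D a hD ha ha1
  have huIcc : uIcc (0:ℝ) 1 = Icc 0 1 := uIcc_of_le zero_le_one
  have hmin : min (0:ℝ) 1 = 0 := min_eq_left zero_le_one
  have hmax : max (0:ℝ) 1 = 1 := max_eq_right zero_le_one
  have hInt : IntervalIntegrable (fun t : ℝ =>
      ((1 / (1 - t)) * (2 * (D - 1)) /
          (D - 2 + D * Real.sqrt (1 + 4 * (D - 1) * lam * t / (1 - t))) - 1) / t)
      MeasureTheory.volume 0 1 := by
    apply intervalIntegral.intervalIntegrable_deriv_of_nonneg (g := myF D a)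
    · rw [huIcc]; exact hcont
    · rw [hmin, hmax]; exact hderiv
    · rw [hmin, hmax]; exact hpos
  refine ⟨hInt, ?_⟩
  have hFTC := intervalIntegral.integral_eq_sub_of_hasDeriv_right
    (huIcc ▸ hcont) (by rw [hmin, hmax]; exact fun x hx => (hderiv x hx).hasDerivWithinAt) hInt
  rw [hFTC]
  -- evaluate F at endpoints
  have hF1 : myF D a 1 = (D - 2) * Real.log D := by
    rw [myF, myW_one]
    norm_num
  have hF0 : myF D a 0 = (D - 2) * (Real.log 2 + Real.log (D - 1)) + Real.log a
      - D * Real.log 2 := by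
    rw [myF, myW_zero]
    have e1 : D + (D - 2) * 1 = 2 * (D - 1) := by ring
    have e2 : 1 + (a - 1) * 1 ^ 2 = a := by ring
    have e3 : (1:ℝ) + 1 = 2 := by norm_num
    rw [e1, e2, e3, Real.log_mul two_ne_zero (by linarith : D - 1 ≠ 0)]
  rw [hF1, hF0]
  have hloga : Real.log a = 2 * Real.log 2 + Real.log (D - 1) + Real.log lam := by
    rw [ha_def]
    rw [Real.log_mul (by nlinarith : (4:ℝ) * (D - 1) ≠ 0) (ne_of_gt hlam0),
        Real.log_mul (by norm_num) (by intro h; nlinarith [h] : D - 1 ≠ 0)]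
    have : Real.log 4 = 2 * Real.log 2 := by
      rw [show (4:ℝ) = 2 ^ 2 by norm_num, Real.log_pow]
      norm_num
    rw [this]
  have hRHS : Real.log (D ^ (d - 2) / ((D - 1) ^ (d - 1) * lam))
      = (D - 2) * Real.log D - ((D - 1) * Real.log (D - 1) + Real.log lam) := by
    rw [Real.log_div (pow_ne_zero _ hD0.ne') (mul_ne_zero (pow_ne_zero _ (by intro h; nlinarith [h] : D - 1 ≠ 0)) hlam0.ne'),
        Real.log_mul (pow_ne_zero _ (by intro h; nlinarith [h] : D - 1 ≠ 0)) (ne_of_gt hlam0),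
        Real.log_pow, Real.log_pow]
    have c2 : ((d - 2 : ℕ) : ℝ) = D - 2 := by
      rw [hD_def]; push_cast [Nat.cast_sub (by omega : 2 ≤ d)]; ring
    have c1 : ((d - 1 : ℕ) : ℝ) = D - 1 := by
      rw [hD_def]; push_cast [Nat.cast_sub (by omega : 1 ≤ d)]; ring
    rw [c1, c2]
  rw [hRHS, hloga]
  ring
end

section
/- Let d ≥ 3 and for k ≥ 0 let a_k denote the number of functions j : {1,…,2k} → {0,1,…,d-1} such that x_{j(1)}·x_{j(2)}^{-1}·⋯·x_{j(2k-1)}·x_{j(2k)}^{-1} = 1 in the free group F_{d-1} on generators x_1,…,x_{d-1} (with the convention x_0 = 1). Then for all real t with 0 ≤ t < 1/(4(d-1)), the series ∑_{k≥0} a_k t^k converges and equals 2(d-1)/( d-2 + d·√(1 - 4(d-1)t) ). -/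
namespace Stmt18

/-- First-passage counts: paths `h → 0` of length `n`, staying `≥ 1` before the end,
up-steps weighted `q`. -/
def F (q : ℕ) : ℕ → ℕ → ℕ
  | 0, 0 => 1
  | 0, _+1 => 0
  | _+1, 0 => 0
  | n+1, h+1 => F q n h + q * F q n (h+2)

/-- Walk counts: paths `h → 0` of length `n`, up-weight `q` from positive height,
`q+1` from `0`. -/
def N (q : ℕ) : ℕ → ℕ → ℕ
  | 0, 0 => 1
  | 0, _+1 => 0
  | n+1, 0 => (q+1) * N q n 1
  | n+1, h+1 => N q n h + q * N q n (h+2)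

lemma F_zero_succ (q h : ℕ) : F q 0 (h+1) = 0 := rfl
lemma F_succ_zero (q n : ℕ) : F q (n+1) 0 = 0 := rfl
lemma F_succ_succ (q n h : ℕ) : F q (n+1) (h+1) = F q n h + q * F q n (h+2) := rfl
lemma N_succ_zero (q n : ℕ) : N q (n+1) 0 = (q+1) * N q n 1 := rfl
lemma N_succ_succ (q n h : ℕ) : N q (n+1) (h+1) = N q n h + q * N q n (h+2) := rfl

lemma F_parity (q : ℕ) : ∀ n h, (n + h) % 2 = 1 → F q n h = 0 := by
  intro n
  induction n with
  | zero =>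
    intro h hp
    cases h with
    | zero => omega
    | succ h => rfl
  | succ n ih =>
    intro h hp
    cases h with
    | zero => rfl
    | succ h =>
      rw [F_succ_succ, ih h (by omega), ih (h+2) (by omega)]
      omega

lemma N_parity (q : ℕ) : ∀ n h, (n + h) % 2 = 1 → N q n h = 0 := by
  intro n
  induction n with
  | zero =>
    intro h hp
    cases h with
    | zero => omega
    | succ h => rfl
  | succ n ih =>
    intro h hp
    cases h with
    | zero => rw [N_succ_zero, ih 1 (by omega), Nat.mul_zero]
    | succ h =>
      rw [N_succ_succ, ih h (by omega), ih (h+2) (by omega)]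
      omega

open Finset in
/-- convolution identity for first passage: `F n (h+1) = ∑ F m 1 * F (n-m) h`. -/
lemma F_conv (q : ℕ) : ∀ n h, F q n (h+1) = ∑ m ∈ range (n+1), F q m 1 * F q (n-m) h := by
  intro n
  induction n with
  | zero =>
    intro h
    simp [F_zero_succ]
  | succ n ih =>
    intro h
    cases h with
    | zero =>
      rw [Finset.sum_range_succ]
      have h1 : ∀ m ∈ range (n+1), F q m 1 * F q (n+1-m) 0 = 0 := by
        intro m hm
        rw [mem_range] at hm
        have : n + 1 - m = (n - m) + 1 := by omega
        rw [this, F_succ_zero, Nat.mul_zero]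
      rw [Finset.sum_eq_zero h1]
      show F q (n+1) (0+1) = 0 + F q (n+1) 1 * F q (n+1-(n+1)) 0
      simp [F]
    | succ h =>
      rw [Finset.sum_range_succ]
      have hz : F q (n+1) 1 * F q (n+1-(n+1)) (h+1) = 0 := by
        simp [F_zero_succ]
      rw [hz, add_zero, F_succ_succ, ih h, ih (h+2), Finset.mul_sum,
        ← Finset.sum_add_distrib]
      apply Finset.sum_congr rfl
      intro m hm
      rw [mem_range] at hm
      have : n + 1 - m = (n - m) + 1 := by omega
      rw [this, F_succ_succ]
      ring

open Finset in
lemma N_conv (q : ℕ) : ∀ n h, N q n h = ∑ m ∈ range (n+1), F q m h * N q (n-m) 0 := by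
  intro n
  induction n with
  | zero =>
    intro h
    cases h with
    | zero => simp [F, N]
    | succ h => simp [F_zero_succ, N]
  | succ n ih =>
    intro h
    cases h with
    | zero =>
      rw [Finset.sum_eq_single 0]
      · simp [F]
      · intro m hm hm0
        obtain ⟨m', rfl⟩ : ∃ m', m = m' + 1 := ⟨m - 1, by omega⟩
        rw [F_succ_zero, Nat.zero_mul]
      · intro hx
        exact absurd (mem_range.mpr (by omega)) hx
    | succ h =>
      rw [Finset.sum_range_succ', N_succ_succ, ih h, ih (h+2), Finset.mul_sum,
        ← Finset.sum_add_distrib]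
      have : ∀ m ∈ range (n+1),
          F q m h * N q (n-m) 0 + q * (F q m (h+2) * N q (n-m) 0)
            = F q (m+1) (h+1) * N q (n+1-(m+1)) 0 := by
        intro m hm
        have : n + 1 - (m+1) = n - m := by omega
        rw [this, F_succ_succ]
        ring
      rw [Finset.sum_congr rfl this]
      simp [F_zero_succ]

open Finset in
lemma sum_range_two_mul {M : Type*} [AddCommMonoid M] (g : ℕ → M) :
    ∀ K, ∑ m ∈ range (2*K), g m = ∑ i ∈ range K, (g (2*i) + g (2*i+1)) := by
  intro K
  induction K with
  | zero => simp
  | succ K ih =>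
    have : 2 * (K+1) = (2*K) + 1 + 1 := by omega
    rw [this, Finset.sum_range_succ, Finset.sum_range_succ, ih, Finset.sum_range_succ]
    abel

open Finset in
lemma F_odd_one (q : ℕ) : ∀ i, F q (2*i+1) 1 = q^i * catalan i := by
  intro i
  induction i using Nat.strong_induction_on with
  | _ i ih =>
    cases i with
    | zero => simp [F, catalan]
    | succ i =>
      have h1 : 2*(i+1)+1 = (2*i+2) + 1 := by omega
      rw [h1]
      rw [F_succ_succ]
      have h2 : F q (2*i+2) 0 = 0 := F_succ_zero q (2*i+1)
      rw [show (2*i+2 : ℕ) = (2*i+1)+1 from rfl] at h2 ⊢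
      rw [h2, Nat.zero_add]
      rw [show ((2*i+1)+1 : ℕ) = 2*(i+1) from by omega]
      rw [F_conv q (2*(i+1)) 1, Finset.sum_range_succ]
      have hlast : F q (2*(i+1)) 1 = 0 := F_parity q _ 1 (by omega)
      rw [hlast, Nat.zero_mul, Nat.add_zero]
      rw [sum_range_two_mul (fun m => F q m 1 * F q (2*(i+1)-m) 1) (i+1)]
      have h3 : ∀ j ∈ range (i+1),
          (F q (2*j) 1 * F q (2*(i+1)-2*j) 1 + F q (2*j+1) 1 * F q (2*(i+1)-(2*j+1)) 1)
            = q^i * (catalan j * catalan (i - j)) := by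
        intro j hj
        rw [mem_range] at hj
        have e1 : F q (2*j) 1 = 0 := F_parity q (2*j) 1 (by omega)
        have e2 : 2*(i+1)-(2*j+1) = 2*(i-j)+1 := by omega
        rw [e1, e2, Nat.zero_mul, Nat.zero_add, ih j (by omega), ih (i-j) (by omega)]
        have : q^j * (q^(i-j)) = q^i := by
          rw [← pow_add]; congr 1; omega
        calc q ^ j * catalan j * (q ^ (i - j) * catalan (i - j))
            = (q^j * q^(i-j)) * (catalan j * catalan (i-j)) := by ring
          _ = q^i * (catalan j * catalan (i - j)) := by rw [this]
      rw [Finset.sum_congr rfl h3, ← Finset.mul_sum]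
      have h4 : ∑ j ∈ range (i+1), catalan j * catalan (i-j) = catalan (i+1) := by
        rw [catalan_succ]
        rw [Finset.sum_range fun j => catalan j * catalan (i - j)]
      rw [h4]
      ring

open Finset in
/-- the main recurrence for `a_k = N q (2k) 0`. -/
lemma N_rec (q : ℕ) (k : ℕ) :
    N q (2*(k+1)) 0 = (q+1) * ∑ i ∈ range (k+1), (q^i * catalan i) * N q (2*(k-i)) 0 := by
  have h0 : 2*(k+1) = (2*k+1)+1 := by omega
  rw [h0, N_succ_zero, N_conv q (2*k+1) 1]
  congr 1
  rw [show (2*k+1+1 : ℕ) = 2*(k+1) from by omega]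
  rw [sum_range_two_mul (fun m => F q m 1 * N q (2*k+1-m) 0) (k+1)]
  apply Finset.sum_congr rfl
  intro j hj
  rw [mem_range] at hj
  have e1 : F q (2*j) 1 = 0 := F_parity q (2*j) 1 (by omega)
  have e2 : 2*k+1-(2*j+1) = 2*(k-j) := by omega
  rw [e1, e2, Nat.zero_mul, Nat.zero_add, F_odd_one]

section Machine

variable {q : ℕ}

/-- one-letter reduction step (matching `FreeGroup.reduce`). -/
def pushL (x : Fin q × Bool) (s : List (Fin q × Bool)) : List (Fin q × Bool) :=
  match s with
  | [] => [x]
  | y :: t => if x.1 = y.1 ∧ x.2 = !y.2 then t else x :: y :: t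

lemma reduce_eq_foldr (M : List (Fin q × Bool)) :
    FreeGroup.reduce M = List.foldr pushL [] M := by
  induction M with
  | nil => rfl
  | cons x M ih =>
    rw [FreeGroup.reduce.cons, List.foldr_cons, ← ih]
    cases h : FreeGroup.reduce M with
    | nil => rfl
    | cons y t => rfl

/-- machine state: (stack, parity); parity `true` = even position (next letter positive). -/
abbrev MState (q : ℕ) := List (Fin q × Bool) × Bool

def mpush (σ : MState q) (a : Option (Fin q)) : MState q :=
  (match a with
   | none => σ.1
   | some i => pushL (i, σ.2) σ.1, !σ.2)

def mrun (σ : MState q) (w : List (Option (Fin q))) : MState q := w.foldl mpush σ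

def mroot : MState q := ([], true)

/-- letters of a word (parity-dependent signs, `none` dropped). -/
def letters : Bool → List (Option (Fin q)) → List (Fin q × Bool)
  | _, [] => []
  | p, none :: w => letters (!p) w
  | p, some i :: w => (i, p) :: letters (!p) w

lemma mrun_fst : ∀ (w : List (Option (Fin q))) (σ : MState q),
    (mrun σ w).1 = List.foldl (fun st x => pushL x st) σ.1 (letters σ.2 w) := by
  intro w
  induction w with
  | nil => intro σ; rfl
  | cons a w ih =>
    intro σ
    cases a with
    | none =>
      show (mrun (mpush σ none) w).1 = _
      rw [ih]
      rfl
    | some i =>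
      show (mrun (mpush σ (some i)) w).1 = _
      rw [ih]
      rfl

lemma mrun_snd : ∀ (w : List (Option (Fin q))) (σ : MState q),
    (mrun σ w).2 = if w.length % 2 = 0 then σ.2 else !σ.2 := by
  intro w
  induction w with
  | nil => intro σ; simp [mrun]
  | cons a w ih =>
    intro σ
    show (mrun (mpush σ a) w).2 = _
    rw [ih]
    have h2 : (mpush σ a).2 = !σ.2 := by cases a <;> rfl
    rw [h2]
    rcases Nat.even_or_odd w.length with h | h
    · have h1 : w.length % 2 = 0 := Nat.even_iff.mp h
      have h3 : (w.length + 1) % 2 = 1 := by omega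
      simp [h1, h3]
    · have h1 : w.length % 2 = 1 := Nat.odd_iff.mp h
      have h3 : (w.length + 1) % 2 = 0 := by omega
      simp [h1, h3]

lemma mrun_fst_eq_reduce (w : List (Option (Fin q))) :
    (mrun (mroot : MState q) w).1 = FreeGroup.reduce ((letters true w).reverse) := by
  rw [mrun_fst, reduce_eq_foldr, List.foldr_reverse]
  rfl

/-- distance to the root in the `(q+1)`-regular bipartite tree. -/
def dist : MState q → ℕ
  | ([], true) => 0
  | ([], false) => 1
  | ((_, true) :: t, p) => dist (t, true) + (if p then 2 else 1)
  | ((_, false) :: t, p) => dist (t, false) + (if p then 1 else 2)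

lemma dist_eq_zero_iff (σ : MState q) : dist σ = 0 ↔ σ = mroot := by
  constructor
  · intro h
    match σ with
    | ([], true) => rfl
    | ([], false) => simp [dist] at h
    | ((i, true) :: t, p) => simp [dist] at h; rcases h with ⟨-, h⟩; cases p <;> simp at h
    | ((i, false) :: t, p) => simp [dist] at h; rcases h with ⟨-, h⟩; cases p <;> simp at h
  · rintro rfl; simp [mroot, dist]

lemma dist_push_root (a : Option (Fin q)) : dist (mpush mroot a) = 1 := by
  cases a <;> simp [mroot, mpush, pushL, dist]

lemma step_down (σ : MState q) (h : σ ≠ mroot) :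
    ∃ a₀ : Option (Fin q), (dist (mpush σ a₀) + 1 = dist σ) ∧
      ∀ a, a ≠ a₀ → dist (mpush σ a) = dist σ + 1 := by
  match σ with
  | ([], true) => exact absurd rfl h
  | ([], false) =>
    refine ⟨none, by simp [mpush, dist], ?_⟩
    rintro (_ | i) ha
    · exact absurd rfl ha
    · simp [mpush, pushL, dist]
  | ((j, true) :: t, true) =>
    refine ⟨none, by simp [mpush, dist], ?_⟩
    rintro (_ | i) ha
    · exact absurd rfl ha
    · have : pushL (i, true) ((j, true) :: t) = (i, true) :: (j, true) :: t := by
        simp [pushL]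
      simp [mpush, this, dist]
  | ((j, false) :: t, true) =>
    refine ⟨some j, ?_, ?_⟩
    · have : pushL (j, true) ((j, false) :: t) = t := by simp [pushL]
      simp [mpush, this, dist]
    · rintro (_ | i) ha
      · simp [mpush, dist]
      · have hij : i ≠ j := fun hh => ha (by rw [hh])
        have : pushL (i, true) ((j, false) :: t) = (i, true) :: (j, false) :: t := by
          simp [pushL, hij]
        simp [mpush, this, dist]
  | ((j, true) :: t, false) =>
    refine ⟨some j, ?_, ?_⟩
    · have : pushL (j, false) ((j, true) :: t) = t := by simp [pushL]
      simp [mpush, this, dist]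
    · rintro (_ | i) ha
      · simp [mpush, dist]
      · have hij : i ≠ j := fun hh => ha (by rw [hh])
        have : pushL (i, false) ((j, true) :: t) = (i, false) :: (j, true) :: t := by
          simp [pushL, hij]
        simp [mpush, this, dist]
  | ((j, false) :: t, false) =>
    refine ⟨none, by simp [mpush, dist], ?_⟩
    rintro (_ | i) ha
    · exact absurd rfl ha
    · have : pushL (i, false) ((j, false) :: t) = (i, false) :: (j, false) :: t := by
        simp [pushL]
      simp [mpush, this, dist]

/-- number of words of length `n` driving the machine from `σ` back to the root. -/
def cnt (q : ℕ) (n : ℕ) (σ : MState q) : ℕ :=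
  Fintype.card {v : Fin n → Option (Fin q) // mrun σ (List.ofFn v) = mroot}

lemma cnt_zero (σ : MState q) : cnt q 0 σ = if σ = mroot then 1 else 0 := by
  unfold cnt
  split_ifs with h
  · subst h
    have : ∀ v : Fin 0 → Option (Fin q), mrun (mroot : MState q) (List.ofFn v) = mroot := by
      intro v; rfl
    rw [Fintype.card_eq_one_iff]
    exact ⟨⟨fun i => i.elim0, this _⟩, fun v => Subtype.ext (funext fun i => i.elim0)⟩
  · rw [Fintype.card_eq_zero_iff]
    constructor
    intro v
    exact h (by simpa [mrun] using v.2)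

lemma cnt_succ (n : ℕ) (σ : MState q) :
    cnt q (n+1) σ = ∑ a : Option (Fin q), cnt q n (mpush σ a) := by
  classical
  unfold cnt
  rw [← Fintype.card_sigma]
  apply Fintype.card_congr
  refine
    { toFun := fun v => ⟨v.1 0, ⟨fun i => v.1 i.succ, ?_⟩⟩
      invFun := fun x => ⟨Fin.cons x.1 x.2.1, ?_⟩
      left_inv := ?_
      right_inv := ?_ }
  · have := v.2
    rwa [List.ofFn_succ, mrun, List.foldl_cons] at this
  · have := x.2.2
    rw [List.ofFn_succ, mrun, List.foldl_cons]
    simpa [Fin.cons_zero, Fin.cons_succ, mrun] using this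
  · intro v
    apply Subtype.ext
    exact funext fun i => Fin.cases rfl (fun j => by simp [Fin.cons_succ]) i
  · rintro ⟨a, w⟩
    refine Sigma.ext rfl ?_
    simp [Fin.cons_zero, Fin.cons_succ]
    exact HEq.rfl

lemma cnt_eq_N : ∀ (n : ℕ) (σ : MState q), cnt q n σ = N q n (dist σ) := by
  intro n
  induction n with
  | zero =>
    intro σ
    rw [cnt_zero]
    split_ifs with h
    · rw [(dist_eq_zero_iff σ).mpr h]; rfl
    · have : dist σ ≠ 0 := fun hh => h ((dist_eq_zero_iff σ).mp hh)
      obtain ⟨h', hh⟩ : ∃ h', dist σ = h' + 1 := ⟨dist σ - 1, by omega⟩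
      rw [hh]; rfl
  | succ n ih =>
    intro σ
    rw [cnt_succ]
    simp_rw [ih]
    by_cases h : σ = mroot
    · subst h
      have : ∀ a : Option (Fin q), N q n (dist (mpush (mroot : MState q) a)) = N q n 1 := by
        intro a; rw [dist_push_root]
      rw [Finset.sum_congr rfl (fun a _ => this a), Finset.sum_const]
      show Fintype.card (Option (Fin q)) • N q n 1 = N q (n+1) (dist (mroot : MState q))
      have hd : dist (mroot : MState q) = 0 := by simp [mroot, dist]
      rw [hd, N_succ_zero, Fintype.card_option, Fintype.card_fin, smul_eq_mul]
    · obtain ⟨a₀, hdown, hup⟩ := step_down σ h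
      have hσ : ∃ h', dist σ = h' + 1 := by
        refine ⟨dist σ - 1, ?_⟩
        have : dist σ ≠ 0 := fun hh => h ((dist_eq_zero_iff σ).mp hh)
        omega
      obtain ⟨h', hh⟩ := hσ
      rw [← Finset.add_sum_erase _ _ (Finset.mem_univ a₀)]
      have hterm : ∀ a ∈ Finset.univ.erase a₀,
          N q n (dist (mpush σ a)) = N q n (h' + 2) := by
        intro a ha
        rw [hup a (Finset.ne_of_mem_erase ha), hh]
      rw [Finset.sum_congr rfl hterm, Finset.sum_const]
      have hcard : (Finset.univ.erase a₀).card = q := by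
        rw [Finset.card_erase_of_mem (Finset.mem_univ a₀), Finset.card_univ,
          Fintype.card_option, Fintype.card_fin]
        omega
      have hdown' : dist (mpush σ a₀) = h' := by omega
      rw [hcard, hdown', hh, N_succ_succ, smul_eq_mul]

end Machine

section Glue

variable {q : ℕ}

/-- signed exponent at position `m` when the word starts with parity `p`. -/
def sgnE (p : Bool) (v : ℕ) : ℤ :=
  if v % 2 = 0 then (if p then 1 else -1) else (if p then -1 else 1)

lemma sgnE_succ (p : Bool) (v : ℕ) : sgnE p (v+1) = sgnE (!p) v := by
  have h : ((v+1) % 2 = 0) ↔ ¬ (v % 2 = 0) := by omega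
  by_cases hv : v % 2 = 0
  · have : ¬ ((v+1) % 2 = 0) := by omega
    cases p <;> simp [sgnE, hv, this]
  · have : (v+1) % 2 = 0 := by omega
    cases p <;> simp [sgnE, hv, this]

/-- element of the free group associated to an optional letter. -/
def el (o : Option (Fin q)) : FreeGroup (Fin q) := o.elim 1 FreeGroup.of

lemma mk_neg {α : Type*} (i : α) : FreeGroup.mk [(i, false)] = (FreeGroup.of i)⁻¹ := by
  rw [show FreeGroup.of i = FreeGroup.mk [(i,true)] from rfl, FreeGroup.inv_mk]
  simp [FreeGroup.invRev]

lemma mk_single (i : Fin q) (p : Bool) :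
    FreeGroup.mk [(i, p)] = (FreeGroup.of i) ^ (if p then (1:ℤ) else -1) := by
  cases p
  · simp only [if_neg Bool.false_ne_true, zpow_neg_one]
    exact mk_neg i
  · simp [FreeGroup.of]

lemma prod_eq_mk : ∀ (n : ℕ) (p : Bool) (j : Fin n → Option (Fin q)),
    ((List.finRange n).map fun m => (el (j m)) ^ (sgnE p m.val)).prod
      = FreeGroup.mk (letters p (List.ofFn j)) := by
  intro n
  induction n with
  | zero =>
    intro p j
    simp [letters, FreeGroup.one_eq_mk]
  | succ n ih =>
    intro p j
    rw [List.finRange_succ, List.map_cons, List.prod_cons, List.map_map]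
    have htail : ((List.finRange n).map
        ((fun m : Fin (n+1) => (el (j m)) ^ (sgnE p m.val)) ∘ Fin.succ)).prod
        = FreeGroup.mk (letters (!p) (List.ofFn (fun i => j i.succ))) := by
      rw [← ih (!p) (fun i => j i.succ)]
      congr 1
      apply List.map_congr_left
      intro m _
      simp only [Function.comp_apply, Fin.val_succ]
      rw [sgnE_succ]
    rw [htail, List.ofFn_succ]
    have h0 : sgnE p (0:ℕ) = if p then (1:ℤ) else -1 := by simp [sgnE]
    cases hj : j 0 with
    | none =>
      show (el none) ^ (sgnE p (0:ℕ)) * _ = _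
      simp only [el, Option.elim, letters]
      rw [one_zpow, one_mul]
    | some i =>
      show (el (some i)) ^ (sgnE p (0:ℕ)) * _ = _
      simp only [el, Option.elim, letters, h0]
      rw [← mk_single, FreeGroup.mul_mk]
      rfl

/-- triviality is invariant under word reversal. -/
lemma mk_reverse_eq_one {α : Type*} (M : List (α × Bool)) :
    FreeGroup.mk M.reverse = 1 ↔ FreeGroup.mk M = 1 := by
  have key : ∀ (M : List (α × Bool)),
      (FreeGroup.lift (fun i => MulOpposite.op (FreeGroup.of i))) (FreeGroup.mk M)
        = MulOpposite.op (FreeGroup.mk M.reverse) := by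
    intro M
    induction M with
    | nil => rw [← FreeGroup.one_eq_mk, map_one, List.reverse_nil, ← FreeGroup.one_eq_mk,
        MulOpposite.op_one]
    | cons x M ih =>
      have : FreeGroup.mk (x :: M) = FreeGroup.mk [x] * FreeGroup.mk M := by
        rw [FreeGroup.mul_mk]; rfl
      rw [this, map_mul, ih]
      have hsingle : (FreeGroup.lift (fun i => MulOpposite.op (FreeGroup.of i)))
          (FreeGroup.mk [x]) = MulOpposite.op (FreeGroup.mk [x]) := by
        obtain ⟨i, b⟩ := x
        cases b
        · rw [mk_neg, map_inv, FreeGroup.lift_apply_of, ← MulOpposite.op_inv, ← mk_neg]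
        · show _ = MulOpposite.op (FreeGroup.of i)
          rw [show FreeGroup.mk [(i, true)] = FreeGroup.of i from rfl, FreeGroup.lift_apply_of]
      rw [hsingle, ← MulOpposite.op_mul, FreeGroup.mul_mk, List.reverse_cons]
  constructor
  · intro h
    have := key M.reverse
    rw [h, List.reverse_reverse] at this
    rw [map_one] at this
    exact MulOpposite.op_injective (by rw [MulOpposite.op_one]; exact this.symm)
  · intro h
    have := key M
    rw [h, map_one] at this
    exact MulOpposite.op_injective (by rw [MulOpposite.op_one]; exact this.symm)

lemma mrun_eq_mroot_iff (k : ℕ) (v : Fin (2*k) → Option (Fin q)) :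
    mrun (mroot : MState q) (List.ofFn v) = mroot ↔
      FreeGroup.mk (letters true (List.ofFn v)) = 1 := by
  have hlen : (List.ofFn v).length = 2*k := List.length_ofFn
  have hsnd : (mrun (mroot : MState q) (List.ofFn v)).2 = true := by
    rw [mrun_snd, hlen]
    simp [mroot, Nat.mul_mod_right]
  have hfst := mrun_fst_eq_reduce (q := q) (List.ofFn v)
  constructor
  · intro h
    have h1 : (mrun (mroot : MState q) (List.ofFn v)).1 = [] := by rw [h]; rfl
    rw [hfst] at h1
    have h2 : FreeGroup.mk ((letters true (List.ofFn v)).reverse) = 1 := by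
      rw [← FreeGroup.toWord_eq_nil_iff, FreeGroup.toWord_mk, h1]
    exact (mk_reverse_eq_one _).mp h2
  · intro h
    have h2 : FreeGroup.mk ((letters true (List.ofFn v)).reverse) = 1 :=
      (mk_reverse_eq_one _).mpr h
    have h1 : FreeGroup.reduce ((letters true (List.ofFn v)).reverse) = [] := by
      rw [← FreeGroup.toWord_mk, FreeGroup.toWord_eq_nil_iff]
      exact h2
    have : mrun (mroot : MState q) (List.ofFn v)
        = ((mrun (mroot : MState q) (List.ofFn v)).1, (mrun (mroot : MState q) (List.ofFn v)).2) := rfl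
    rw [this, hsnd, hfst, h1]
    rfl

lemma card_eq_cnt (q k : ℕ) :
    Nat.card {j : Fin (2 * k) → Option (Fin q) //
        ((List.finRange (2 * k)).map fun m =>
          ((j m).elim 1 FreeGroup.of : FreeGroup (Fin q))
            ^ (if m.val % 2 = 0 then (1 : ℤ) else -1)).prod = 1}
      = cnt q (2*k) mroot := by
  classical
  rw [Nat.card_eq_fintype_card]
  unfold cnt
  apply Fintype.card_congr
  apply Equiv.subtypeEquivRight
  intro v
  have hmap : ((List.finRange (2*k)).map fun m =>
      ((v m).elim 1 FreeGroup.of : FreeGroup (Fin q)) ^ (if m.val % 2 = 0 then (1:ℤ) else -1))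
      = ((List.finRange (2*k)).map fun m => (el (v m)) ^ (sgnE true m.val)) := by
    apply List.map_congr_left
    intro m _
    have hs : sgnE true m.val = if m.val % 2 = 0 then (1:ℤ) else -1 := by simp [sgnE]
    rw [hs]
    rfl
  rw [hmap, mrun_eq_mroot_iff k v, ← prod_eq_mk (2*k) true v]

end Glue

section Analysis

open Finset

noncomputable def cB (n : ℕ) : ℝ := (Nat.centralBinom n : ℝ) / 4^n

lemma cB_nonneg (n : ℕ) : 0 ≤ cB n := by
  unfold cB
  positivity

lemma cB_succ (n : ℕ) : cB (n+1) = (2*n+1) / (2*(n+1)) * cB n := by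
  have h := Nat.succ_mul_centralBinom_succ n
  have hR : ((n:ℝ)+1) * (Nat.centralBinom (n+1) : ℝ) = 2 * (2*n+1) * (Nat.centralBinom n : ℝ) := by
    exact_mod_cast congrArg (fun x : ℕ => (x : ℝ)) h
  unfold cB
  have hn : ((n:ℝ)+1) ≠ 0 := by positivity
  field_simp
  linear_combination (2*(4:ℝ)^n) * hR

lemma cB_le_one (n : ℕ) : cB n ≤ 1 := by
  induction n with
  | zero => simp [cB, Nat.centralBinom]
  | succ n ih =>
    rw [cB_succ]
    have h1 : (2*(n:ℝ)+1) / (2*((n:ℝ)+1)) ≤ 1 := by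
      rw [div_le_one (by positivity)]
      linarith
    calc (2*(n:ℝ)+1) / (2*((n:ℝ)+1)) * cB n ≤ 1 * cB n := by
          apply mul_le_mul_of_nonneg_right h1 (cB_nonneg n)
      _ ≤ 1 := by rw [one_mul]; exact ih

lemma catalan_partial (n : ℕ) :
    ∑ i ∈ range n, (catalan i : ℝ) / 4^(i+1) = (1 - cB n) / 2 := by
  induction n with
  | zero => simp [cB, Nat.centralBinom]
  | succ n ih =>
    have hcat : ((n:ℝ)+1) * (catalan n : ℝ) = (Nat.centralBinom n : ℝ) := by
      exact_mod_cast congrArg (fun x : ℕ => (x : ℝ)) (succ_mul_catalan_eq_centralBinom n)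
    have hn : ((n:ℝ)+1) ≠ 0 := by positivity
    have h4n : (4:ℝ)^n ≠ 0 := by positivity
    have hstep : (catalan n : ℝ)/4^(n+1) = (cB n - cB (n+1))/2 := by
      rw [cB_succ]
      unfold cB
      rw [← hcat, pow_succ]
      field_simp
      ring
    rw [Finset.sum_range_succ, ih, hstep]
    ring

lemma catalan_le_four_pow (i : ℕ) : (catalan i : ℝ) ≤ 4^i := by
  have h1 : (catalan i : ℝ) ≤ ((i:ℝ)+1) * catalan i := by
    have hc : (0:ℝ) ≤ (catalan i : ℝ) := by positivity
    have hi : (0:ℝ) ≤ (i:ℝ) := by positivity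
    nlinarith
  have hcat : ((i:ℝ)+1) * (catalan i : ℝ) = (Nat.centralBinom i : ℝ) := by
    exact_mod_cast congrArg (fun x : ℕ => (x : ℝ)) (succ_mul_catalan_eq_centralBinom i)
  have h2 : (Nat.centralBinom i : ℝ) ≤ 4^i := by
    have := cB_le_one i
    unfold cB at this
    rw [div_le_one (by positivity)] at this
    exact this
  linarith

lemma catalan_partial_le (n : ℕ) : ∑ i ∈ range n, (catalan i : ℝ) / 4^i ≤ 2 := by
  have h := catalan_partial n
  have h2 : ∑ i ∈ range n, (catalan i : ℝ) / 4^i = 4 * ∑ i ∈ range n, (catalan i : ℝ) / 4^(i+1) := by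
    rw [Finset.mul_sum]
    apply Finset.sum_congr rfl
    intro i _
    rw [pow_succ]
    field_simp
  rw [h2, h]
  have := cB_nonneg n
  linarith

section Yx

variable {x : ℝ} (hx0 : 0 ≤ x) (hx1 : x < 1/4)

include hx0 hx1 in
lemma summable_cat : Summable (fun m => (catalan m : ℝ) * x^(m+1)) := by
  have hg : Summable (fun m : ℕ => x * (4*x)^m) :=
    (summable_geometric_of_lt_one (by positivity) (by linarith)).mul_left x
  apply Summable.of_nonneg_of_le
    (fun m => mul_nonneg (by positivity) (pow_nonneg hx0 _)) (fun m => ?_) hg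
  have h1 : (catalan m : ℝ) * x^(m+1) ≤ 4^m * x^(m+1) :=
    mul_le_mul_of_nonneg_right (catalan_le_four_pow m) (pow_nonneg hx0 _)
  calc (catalan m : ℝ) * x^(m+1) ≤ 4^m * x^(m+1) := h1
    _ = x * (4*x)^m := by rw [mul_pow, pow_succ]; ring

include hx0 hx1 in
lemma Y_le_half : ∑' m, (catalan m : ℝ) * x^(m+1) ≤ 1/2 := by
  have hs := summable_cat hx0 hx1
  apply le_of_tendsto' hs.hasSum.tendsto_sum_nat
  intro n
  have h1 : ∑ i ∈ range n, (catalan i : ℝ) * x^(i+1)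
      ≤ ∑ i ∈ range n, (catalan i : ℝ) / 4^(i+1) := by
    apply Finset.sum_le_sum
    intro i _
    have : x^(i+1) ≤ (1/4)^(i+1) := pow_le_pow_left₀ hx0 (by linarith) (i+1)
    have h4 : ((1:ℝ)/4)^(i+1) = 1/4^(i+1) := by rw [div_pow]; norm_num
    calc (catalan i : ℝ) * x^(i+1) ≤ (catalan i : ℝ) * (1/4)^(i+1) := by
          apply mul_le_mul_of_nonneg_left this (by positivity)
      _ = (catalan i : ℝ) / 4^(i+1) := by rw [h4]; ring
  have h2 := catalan_partial n
  have h3 := cB_nonneg n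
  linarith

include hx0 hx1 in
set_option maxHeartbeats 1000000 in
lemma Y_quad : ∑' m, (catalan m : ℝ) * x^(m+1)
    = x + (∑' m, (catalan m : ℝ) * x^(m+1))^2 := by
  have hs := summable_cat hx0 hx1
  have hnorm : Summable (fun m => ‖(catalan m : ℝ) * x^(m+1)‖) := by
    apply hs.congr
    intro m
    rw [Real.norm_of_nonneg (by positivity)]
  have hsq := tsum_mul_tsum_eq_tsum_sum_antidiagonal_of_summable_norm
    (f := fun m => (catalan m : ℝ) * x^(m+1)) (g := fun m => (catalan m : ℝ) * x^(m+1))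
    hnorm hnorm
  have hinner : ∀ n : ℕ, ∑ kl ∈ Finset.HasAntidiagonal.antidiagonal n,
      ((catalan kl.1 : ℝ) * x^(kl.1+1)) * ((catalan kl.2 : ℝ) * x^(kl.2+1))
        = (catalan (n+1) : ℝ) * x^(n+2) := by
    intro n
    have h1 : ∀ kl ∈ Finset.HasAntidiagonal.antidiagonal n,
        ((catalan kl.1 : ℝ) * x^(kl.1+1)) * ((catalan kl.2 : ℝ) * x^(kl.2+1))
          = ((catalan kl.1 * catalan kl.2 : ℕ) : ℝ) * x^(n+2) := by
      intro kl hkl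
      rw [Finset.HasAntidiagonal.mem_antidiagonal] at hkl
      push_cast
      have hpow : x^(kl.1+1) * x^(kl.2+1) = x^(n+2) := by
        rw [← pow_add]; congr 1; omega
      linear_combination ((catalan kl.1 : ℝ) * (catalan kl.2 : ℝ)) * hpow
    rw [Finset.sum_congr rfl h1, ← Finset.sum_mul, ← Nat.cast_sum, ← catalan_succ' n]
  rw [← sq] at hsq
  rw [hsq, tsum_congr hinner]
  have hshift := Summable.tsum_eq_zero_add (f := fun m => (catalan m : ℝ) * x^(m+1)) hs
  rw [hshift]
  congr 1
  · norm_num [catalan_zero]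

include hx0 hx1 in
lemma Y_val : ∑' m, (catalan m : ℝ) * x^(m+1) = (1 - Real.sqrt (1 - 4*x)) / 2 := by
  set Y := ∑' m, (catalan m : ℝ) * x^(m+1) with hY
  have hq := Y_quad hx0 hx1
  have hle := Y_le_half hx0 hx1
  have hsq : (1 - 2*Y)^2 = 1 - 4*x := by nlinarith [hq]
  have h1 : Real.sqrt (1 - 4*x) = 1 - 2*Y := by
    rw [← hsq]
    exact Real.sqrt_sq (by linarith)
  rw [h1]
  ring

end Yx

end Analysis

section Final

open Finset

lemma N_le_pow (q : ℕ) (hq : 1 ≤ q) : ∀ k, (N q (2*k) 0 : ℝ) ≤ (4*(q:ℝ))^k := by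
  intro k
  induction k using Nat.strong_induction_on with
  | _ k ih =>
    cases k with
    | zero => simp [N]
    | succ k =>
      have hcast : (N q (2*(k+1)) 0 : ℝ)
          = ((q:ℝ)+1) * ∑ i ∈ range (k+1), (q:ℝ)^i * (catalan i:ℝ) * (N q (2*(k-i)) 0 : ℝ) := by
        rw [N_rec q k]
        push_cast
        ring_nf
      rw [hcast]
      have hterm : ∀ i ∈ range (k+1),
          (q:ℝ)^i * (catalan i:ℝ) * (N q (2*(k-i)) 0 : ℝ)
            ≤ (catalan i : ℝ)/4^i * (4*(q:ℝ))^k := by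
        intro i hi
        rw [mem_range] at hi
        have h1 : (N q (2*(k-i)) 0 : ℝ) ≤ (4*(q:ℝ))^(k-i) := ih (k-i) (by omega)
        have h2 : (q:ℝ)^i * (4*(q:ℝ))^(k-i) = (4*(q:ℝ))^k / 4^i := by
          have h3 : (4*(q:ℝ))^k = (4*(q:ℝ))^i * (4*(q:ℝ))^(k-i) := by
            rw [← pow_add]; congr 1; omega
          rw [h3, mul_pow]
          have h4 : (4:ℝ)^i ≠ 0 := by positivity
          field_simp
          ring
        calc (q:ℝ)^i * (catalan i:ℝ) * (N q (2*(k-i)) 0 : ℝ)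
            ≤ (q:ℝ)^i * (catalan i:ℝ) * (4*(q:ℝ))^(k-i) := by
              apply mul_le_mul_of_nonneg_left h1 (by positivity)
          _ = (catalan i : ℝ) * ((q:ℝ)^i * (4*(q:ℝ))^(k-i)) := by ring
          _ = (catalan i : ℝ) * ((4*(q:ℝ))^k / 4^i) := by rw [h2]
          _ = (catalan i : ℝ)/4^i * (4*(q:ℝ))^k := by ring
      have hsum : ∑ i ∈ range (k+1), (q:ℝ)^i * (catalan i:ℝ) * (N q (2*(k-i)) 0 : ℝ)
          ≤ 2 * (4*(q:ℝ))^k := by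
        calc ∑ i ∈ range (k+1), (q:ℝ)^i * (catalan i:ℝ) * (N q (2*(k-i)) 0 : ℝ)
            ≤ ∑ i ∈ range (k+1), (catalan i : ℝ)/4^i * (4*(q:ℝ))^k :=
              Finset.sum_le_sum hterm
          _ = (∑ i ∈ range (k+1), (catalan i : ℝ)/4^i) * (4*(q:ℝ))^k := by
              rw [Finset.sum_mul]
          _ ≤ 2 * (4*(q:ℝ))^k := by
              apply mul_le_mul_of_nonneg_right (catalan_partial_le (k+1)) (by positivity)
      have hq1 : (1:ℝ) ≤ (q:ℝ) := by exact_mod_cast hq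
      have hpos : (0:ℝ) ≤ (4*(q:ℝ))^k := by positivity
      have hsum0 : 0 ≤ ∑ i ∈ range (k+1), (q:ℝ)^i * (catalan i:ℝ) * (N q (2*(k-i)) 0 : ℝ) := by
        apply Finset.sum_nonneg
        intro i _
        positivity
      calc ((q:ℝ)+1) * ∑ i ∈ range (k+1), (q:ℝ)^i * (catalan i:ℝ) * (N q (2*(k-i)) 0 : ℝ)
          ≤ ((q:ℝ)+1) * (2 * (4*(q:ℝ))^k) := by
            apply mul_le_mul_of_nonneg_left hsum (by positivity)
        _ ≤ (4*(q:ℝ)) * (4*(q:ℝ))^k := by nlinarith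
        _ = (4*(q:ℝ))^(k+1) := by rw [pow_succ]; ring

lemma main_hasSum (q : ℕ) (hq : 2 ≤ q) (t : ℝ) (ht0 : 0 ≤ t) (ht4 : t < 1/(4*(q:ℝ))) :
    HasSum (fun k => (N q (2*k) 0 : ℝ) * t^k)
      (2*(q:ℝ)/((q:ℝ)-1+((q:ℝ)+1)*Real.sqrt (1-4*(q:ℝ)*t))) := by
  have hqR : (2:ℝ) ≤ (q:ℝ) := by exact_mod_cast hq
  have hq0 : (0:ℝ) < (q:ℝ) := by linarith
  set x : ℝ := (q:ℝ) * t with hxdef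
  have hx0 : 0 ≤ x := by positivity
  have hx1 : x < 1/4 := by
    have := (mul_lt_mul_of_pos_left ht4 hq0)
    calc x < (q:ℝ) * (1/(4*(q:ℝ))) := this
      _ = 1/4 := by
          field_simp
  have h4x : 4*x < 1 := by linarith
  -- summability of the main series
  set aT : ℕ → ℝ := fun k => (N q (2*k) 0 : ℝ) * t^k with haT
  have haT_nonneg : ∀ k, 0 ≤ aT k := fun k => by
    simp only [haT]; positivity
  have hA : Summable aT := by
    have hgeo : Summable (fun k : ℕ => (4*x)^k) :=
      summable_geometric_of_lt_one (by positivity) h4x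
    apply Summable.of_nonneg_of_le haT_nonneg (fun k => ?_) hgeo
    have h1 : (N q (2*k) 0 : ℝ) ≤ (4*(q:ℝ))^k := N_le_pow q (by omega) k
    calc aT k ≤ (4*(q:ℝ))^k * t^k := by
          apply mul_le_mul_of_nonneg_right h1 (by positivity)
      _ = (4*x)^k := by rw [← mul_pow]; congr 1; rw [hxdef]; ring
  -- the auxiliary series
  set g : ℕ → ℝ := fun i => ((q:ℝ)^i * (catalan i : ℝ)) * t^(i+1) with hgdef
  have hg_eq : ∀ i, g i = ((catalan i : ℝ) * x^(i+1)) / q := by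
    intro i
    simp only [hgdef, hxdef]
    rw [mul_pow]
    field_simp
    ring
  have hgsum : Summable g := by
    apply Summable.congr ((summable_cat hx0 hx1).div_const (q:ℝ))
    intro i
    rw [hg_eq]
  have hgval : ∑' i, g i = (1 - Real.sqrt (1 - 4*x)) / (2*(q:ℝ)) := by
    rw [tsum_congr hg_eq, tsum_div_const, Y_val hx0 hx1]
    field_simp
  -- Cauchy product identity
  have hgnorm : Summable (fun i => ‖g i‖) := by
    apply hgsum.congr
    intro i
    rw [Real.norm_of_nonneg]
    simp only [hgdef]
    positivity
  have hAnorm : Summable (fun k => ‖aT k‖) := by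
    apply hA.congr
    intro k
    rw [Real.norm_of_nonneg (haT_nonneg k)]
  have hCauchy := tsum_mul_tsum_eq_tsum_sum_antidiagonal_of_summable_norm hgnorm hAnorm
  have hinner : ∀ n : ℕ, ((q:ℝ)+1) * ∑ kl ∈ Finset.HasAntidiagonal.antidiagonal n, g kl.1 * aT kl.2
      = aT (n+1) := by
    intro n
    rw [Finset.Nat.sum_antidiagonal_eq_sum_range_succ_mk]
    have hterm : ∀ i ∈ range (n+1), g i * aT (n-i)
        = ((q:ℝ)^i * (catalan i : ℝ) * (N q (2*(n-i)) 0 : ℝ)) * t^(n+1) := by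
      intro i hi
      rw [mem_range] at hi
      simp only [hgdef, haT]
      have hpow : t^(i+1) * t^(n-i) = t^(n+1) := by
        rw [← pow_add]; congr 1; omega
      calc (q:ℝ)^i * (catalan i:ℝ) * t^(i+1) * ((N q (2*(n-i)) 0 : ℝ) * t^(n-i))
          = ((q:ℝ)^i * (catalan i:ℝ) * (N q (2*(n-i)) 0 : ℝ)) * (t^(i+1) * t^(n-i)) := by ring
        _ = ((q:ℝ)^i * (catalan i:ℝ) * (N q (2*(n-i)) 0 : ℝ)) * t^(n+1) := by rw [hpow]
    rw [Finset.sum_congr rfl hterm, ← Finset.sum_mul]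
    have hcast : (N q (2*(n+1)) 0 : ℝ)
        = ((q:ℝ)+1) * ∑ i ∈ range (n+1), (q:ℝ)^i * (catalan i:ℝ) * (N q (2*(n-i)) 0 : ℝ) := by
      rw [N_rec q n]
      push_cast
      ring_nf
    simp only [haT]
    rw [hcast]
    ring
  -- the functional equation
  set A : ℝ := ∑' k, aT k with hAdef
  have hshift : A = 1 + ∑' n, aT (n+1) := by
    rw [hAdef, Summable.tsum_eq_zero_add hA]
    congr 1
    simp [haT, N]
  have hEq : ((q:ℝ)+1) * ((∑' i, g i) * A) = A - 1 := by
    have h1 : (∑' i, g i) * A = ∑' n, ∑ kl ∈ Finset.HasAntidiagonal.antidiagonal n, g kl.1 * aT kl.2 := by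
      rw [hAdef]; exact hCauchy
    rw [h1, ← tsum_mul_left, tsum_congr hinner]
    rw [hshift]
    ring
  -- solve
  set s : ℝ := Real.sqrt (1 - 4*x) with hsdef
  have hs0 : 0 ≤ s := Real.sqrt_nonneg _
  have hc : ((q:ℝ)+1) * (∑' i, g i) = ((q:ℝ)+1) * (1-s) / (2*(q:ℝ)) := by
    rw [hgval]; ring
  have hD : 0 < (q:ℝ)-1+((q:ℝ)+1)*s := by nlinarith
  have hAval : A = 2*(q:ℝ)/((q:ℝ)-1+((q:ℝ)+1)*s) := by
    have h1 : ((q:ℝ)+1) * (1-s) / (2*(q:ℝ)) * A = A - 1 := by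
      rw [← hc]
      rw [mul_div_assoc] at *
      calc ((q:ℝ)+1) * (∑' i, g i) * A = ((q:ℝ)+1) * ((∑' i, g i) * A) := by ring
        _ = A - 1 := hEq
    field_simp at h1
    rw [eq_div_iff (ne_of_gt hD)]
    nlinarith [h1]
  have hfinal : HasSum aT A := hA.hasSum
  rw [hAval] at hfinal
  have hxt : 1 - 4*x = 1 - 4*(q:ℝ)*t := by rw [hxdef]; ring
  rw [hsdef, hxt] at hfinal
  exact hfinal

end Final

end Stmt18

/-- the generating series of the numbers `a_k` of trivial alternating words
of length `2k` (equivalently, closed walks of length `2k` on the `d`-regular tree) equals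
`2(d-1)/(d-2 + d√(1-4(d-1)t))` for `0 ≤ t < 1/(4(d-1))`. -/
theorem stmt18 (d : ℕ) (hd : 3 ≤ d) (t : ℝ)
    (ht : t ∈ Set.Ico (0:ℝ) (1 / (4 * ((d : ℝ) - 1)))) :
    HasSum (fun k : ℕ =>
        ((Nat.card {j : Fin (2 * k) → Option (Fin (d - 1)) //
            ((List.finRange (2 * k)).map fun m =>
              ((j m).elim 1 FreeGroup.of : FreeGroup (Fin (d - 1)))
                ^ (if m.val % 2 = 0 then (1 : ℤ) else -1)).prod = 1}) : ℝ) * t ^ k)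
      (2 * ((d : ℝ) - 1) / ((d : ℝ) - 2 + d * Real.sqrt (1 - 4 * ((d : ℝ) - 1) * t))) := by
  obtain ⟨ht0, ht4⟩ := ht
  set q : ℕ := d - 1 with hqdef
  have hq : 2 ≤ q := by omega
  have hqcast : ((q:ℕ):ℝ) = (d:ℝ) - 1 := by
    rw [hqdef]
    push_cast [Nat.cast_sub (by omega : 1 ≤ d)]
    ring
  have hcard : ∀ k : ℕ,
      (Nat.card {j : Fin (2 * k) → Option (Fin (d - 1)) //
          ((List.finRange (2 * k)).map fun m =>
            ((j m).elim 1 FreeGroup.of : FreeGroup (Fin (d - 1)))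
              ^ (if m.val % 2 = 0 then (1 : ℤ) else -1)).prod = 1} : ℝ)
        = (Stmt18.N q (2*k) 0 : ℝ) := by
    intro k
    have h1 := Stmt18.card_eq_cnt q k
    have h2 := Stmt18.cnt_eq_N (q := q) (2*k) Stmt18.mroot
    have h3 : Stmt18.dist (Stmt18.mroot : Stmt18.MState q) = 0 := by
      simp [Stmt18.mroot, Stmt18.dist]
    rw [h3] at h2
    rw [h1, h2]
  have hmain := Stmt18.main_hasSum q hq t ht0 (by rw [hqcast]; exact ht4)
  have htarget : 2*((q:ℕ):ℝ)/(((q:ℕ):ℝ)-1+(((q:ℕ):ℝ)+1)*Real.sqrt (1-4*((q:ℕ):ℝ)*t))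
      = 2 * ((d : ℝ) - 1) / ((d : ℝ) - 2 + d * Real.sqrt (1 - 4 * ((d : ℝ) - 1) * t)) := by
    rw [hqcast]
    ring_nf
  rw [htarget] at hmain
  apply HasSum.congr_fun hmain
  intro k
  rw [hcard k]
end
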